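/- Let n > 1 be a squarefree integer. Then F_n(x)/(1 - x^n) = ∑_{m | n} μ(m)·x^m/(1 - x^m) as rational functions, where the sum runs over all positive divisors m of n and μ is the Möbius function. -/

import Mathlib

open Polynomial

/-- Fekete polynomial of the principal Dirichlet character mod `n`. -/
noncomputable def Fek (n : ℕ) : Polynomial ℤ :=
  ∑ a ∈ Finset.range n, if Nat.gcd a n = 1 then X ^ a else 0

open Finset ArithmeticFunction ArithmeticFunction.Moebius in
theorem stmt5 (n : ℕ) (hn : 1 < n) (hsf : Squarefree n) :
    (algebraMap (Polynomial ℚ) (RatFunc ℚ)) ((Fek n).map (Int.castRingHom ℚ))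
        / (1 - RatFunc.X ^ n) =
      ∑ m ∈ n.divisors, ((ArithmeticFunction.moebius m : ℤ) : RatFunc ℚ) * RatFunc.X ^ m
        / (1 - RatFunc.X ^ m) := by
  have hn0 : 0 < n := by omega
  set Y : RatFunc ℚ := RatFunc.X with hY
  -- 1 - Y^m ≠ 0 for m ≥ 1
  have hne : ∀ m : ℕ, 0 < m → (1 - Y ^ m) ≠ 0 := by
    intro m hm h
    have hx : Y ^ m = 1 := by linear_combination -h
    have hx2 : (algebraMap (Polynomial ℚ) (RatFunc ℚ)) (X ^ m) =
        (algebraMap (Polynomial ℚ) (RatFunc ℚ)) 1 := by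
      simpa [map_pow, RatFunc.algebraMap_X] using hx
    have hx3 : (X : Polynomial ℚ) ^ m = 1 := RatFunc.algebraMap_injective ℚ hx2
    have := congrArg (Polynomial.eval (2 : ℚ)) hx3
    simp at this
    have h2 : (2:ℚ) ^ m ≥ 2 ^ 1 := by
      apply pow_le_pow_right₀ (by norm_num) hm
    norm_num at h2
    rw [this] at h2
    norm_num at h2
  -- sum of moebius over divisors
  have hsum : ∀ x : ℕ, ∑ i ∈ x.divisors, μ i = if x = 1 then 1 else 0 := by
    intro x
    rw [← ArithmeticFunction.coe_mul_zeta_apply, ArithmeticFunction.moebius_mul_coe_zeta,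
      ArithmeticFunction.one_apply]
  -- geometric sum per divisor
  set G : ℕ → RatFunc ℚ := fun d => ∑ j ∈ range (n / d), (Y ^ d) ^ j with hG
  have hGd : ∀ d ∈ n.divisors, (1 - Y ^ d) * G d = 1 - Y ^ n := by
    intro d hd
    obtain ⟨hdn, -⟩ := Nat.mem_divisors.mp hd
    have hgeo := geom_sum_mul (Y ^ d) (n / d)
    have hpow : (Y ^ d) ^ (n / d) = Y ^ n := by
      rw [← pow_mul, Nat.mul_div_cancel' hdn]
    rw [hpow] at hgeo
    linear_combination -hgeo
  -- RHS rewriting over common denominator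
  have hterm : ∀ d ∈ n.divisors,
      ((μ d : ℤ) : RatFunc ℚ) * Y ^ d / (1 - Y ^ d)
        = ((μ d : ℤ) : RatFunc ℚ) * (Y ^ d * G d) / (1 - Y ^ n) := by
    intro d hd
    have hd0 : 0 < d := Nat.pos_of_mem_divisors hd
    rw [div_eq_div_iff (hne d hd0) (hne n hn0)]
    have := hGd d hd
    linear_combination (-(((μ d : ℤ) : RatFunc ℚ) * Y ^ d)) * this
  rw [Finset.sum_congr rfl hterm, ← Finset.sum_div]
  -- Now identify the numerators
  congr 1
  -- expand the Fekete polynomial image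
  have hFek : (algebraMap (Polynomial ℚ) (RatFunc ℚ)) ((Fek n).map (Int.castRingHom ℚ))
      = ∑ a ∈ range n, if Nat.gcd a n = 1 then Y ^ a else 0 := by
    simp [Fek, Polynomial.map_sum, apply_ite (Polynomial.map (Int.castRingHom ℚ)),
      apply_ite (algebraMap (Polynomial ℚ) (RatFunc ℚ)), map_sum, map_pow,
      RatFunc.algebraMap_X, hY]
  rw [hFek]
  -- turn the coprimality indicator into a moebius sum
  have hind : ∀ a ∈ range n, (if Nat.gcd a n = 1 then Y ^ a else 0)
      = ∑ d ∈ n.divisors, if d ∣ a then ((μ d : ℤ) : RatFunc ℚ) * Y ^ a else 0 := by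
    intro a _
    have hdiv : (Nat.gcd a n).divisors = n.divisors.filter (fun d => d ∣ a) := by
      ext d
      have hg0 : Nat.gcd a n ≠ 0 := Nat.gcd_ne_zero_right hn0.ne'
      have hn' : n ≠ 0 := hn0.ne'
      simp only [Nat.mem_divisors, Finset.mem_filter, Nat.dvd_gcd_iff]
      tauto
    have := hsum (Nat.gcd a n)
    rw [hdiv, Finset.sum_filter] at this
    have hcast : ((if Nat.gcd a n = 1 then (1:ℤ) else 0 : ℤ) : RatFunc ℚ)
        = ∑ d ∈ n.divisors, if d ∣ a then ((μ d : ℤ) : RatFunc ℚ) else 0 := by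
      rw [← this]
      push_cast
      rfl
    calc (if Nat.gcd a n = 1 then Y ^ a else 0)
        = ((if Nat.gcd a n = 1 then (1:ℤ) else 0 : ℤ) : RatFunc ℚ) * Y ^ a := by
          split <;> simp
      _ = (∑ d ∈ n.divisors, if d ∣ a then ((μ d : ℤ) : RatFunc ℚ) else 0) * Y ^ a := by
          rw [hcast]
      _ = ∑ d ∈ n.divisors, if d ∣ a then ((μ d : ℤ) : RatFunc ℚ) * Y ^ a else 0 := by
          rw [Finset.sum_mul]
          exact Finset.sum_congr rfl fun d _ => by split <;> simp
  rw [Finset.sum_congr rfl hind, Finset.sum_comm]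
  -- reindex the inner sums
  have hinner : ∀ d ∈ n.divisors,
      (∑ a ∈ range n, if d ∣ a then ((μ d : ℤ) : RatFunc ℚ) * Y ^ a else 0)
        = ((μ d : ℤ) : RatFunc ℚ) * G d := by
    intro d hd
    have hd0 : 0 < d := Nat.pos_of_mem_divisors hd
    obtain ⟨hdn, -⟩ := Nat.mem_divisors.mp hd
    rw [← Finset.sum_filter, hG]
    simp only [← pow_mul]
    rw [Finset.mul_sum]
    refine Finset.sum_nbij' (fun a => a / d) (fun j => d * j) ?_ ?_ ?_ ?_ ?_
    · intro a ha
      simp only [Finset.mem_filter, Finset.mem_range] at ha ⊢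
      exact Nat.div_lt_div_of_lt_of_dvd hdn ha.1
    · intro j hj
      simp only [Finset.mem_filter, Finset.mem_range] at hj ⊢
      constructor
      · calc d * j < d * (j + 1) := by
              exact (Nat.mul_lt_mul_left hd0).mpr (Nat.lt_succ_self j)
          _ ≤ d * (n / d) := Nat.mul_le_mul_left d hj
          _ = n := Nat.mul_div_cancel' hdn
      · exact Dvd.intro j rfl
    · intro a ha
      simp only [Finset.mem_filter] at ha
      exact Nat.mul_div_cancel' ha.2
    · intro j _
      exact Nat.mul_div_cancel_left j hd0
    · intro a ha
      simp only [Finset.mem_filter] at ha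
      rw [Nat.mul_div_cancel' ha.2]
  rw [Finset.sum_congr rfl hinner]
  -- final step: μ sums to zero
  have hμ0 : ∑ d ∈ n.divisors, ((μ d : ℤ) : RatFunc ℚ) = 0 := by
    have := hsum n
    rw [if_neg (by omega)] at this
    have : ((∑ d ∈ n.divisors, μ d : ℤ) : RatFunc ℚ) = 0 := by rw [this]; simp
    rw [← this]
    push_cast
    rfl
  have step : ∀ d ∈ n.divisors,
      ((μ d : ℤ) : RatFunc ℚ) * G d
        = ((μ d : ℤ) : RatFunc ℚ) * (Y ^ d * G d) + ((μ d : ℤ) : RatFunc ℚ) * (1 - Y ^ n) := by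
    intro d hd
    have := hGd d hd
    linear_combination ((μ d : ℤ) : RatFunc ℚ) * this
  rw [Finset.sum_congr rfl step, Finset.sum_add_distrib, ← Finset.sum_mul, hμ0]
  ring
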